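/- For every fixed m ≥ 2, sat(Q_d, Q_m) ≥ (m−1−o(1))·2^d as d → ∞. -/

import Mathlib

open SimpleGraph Finset

def cube (d : ℕ) : SimpleGraph (Fin d → ZMod 2) :=
  SimpleGraph.fromRel (fun u v => ∃ i, u i ≠ v i ∧ ∀ j, j ≠ i → u j = v j)

def grid (k d : ℕ) : SimpleGraph (Fin d → Fin k) :=
  SimpleGraph.fromRel (fun u v => ∃ i, ((u i : ℕ)) + 1 = (v i : ℕ) ∧ ∀ j, j ≠ i → u j = v j)

def CopyAt {α β : Type*} (H : SimpleGraph α) (G : SimpleGraph β) (u v : β) : Prop :=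
  ∃ f : α → β, Function.Injective f ∧ (∀ ⦃a b⦄, H.Adj a b → G.Adj (f a) (f b)) ∧
    ∃ a b, H.Adj a b ∧ f a = u ∧ f b = v

def ContainsCopy {α β : Type*} (H : SimpleGraph α) (G : SimpleGraph β) : Prop :=
  ∃ f : α → β, Function.Injective f ∧ ∀ ⦃a b⦄, H.Adj a b → G.Adj (f a) (f b)

def WeaklySaturated {α β : Type*} (F G : SimpleGraph β) (H : SimpleGraph α) : Prop :=
  G ≤ F ∧ ∃ (n : ℕ) (seq : ℕ → SimpleGraph β), seq 0 = G ∧ seq n = F ∧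
    ∀ i < n, ∃ u v : β, ¬ (seq i).Adj u v ∧ F.Adj u v ∧
      seq (i + 1) = seq i ⊔ SimpleGraph.fromEdgeSet {s(u, v)} ∧
      CopyAt H (seq (i + 1)) u v

noncomputable def wsatNum {α β : Type*} (F : SimpleGraph β) (H : SimpleGraph α) : ℕ :=
  sInf {n | ∃ G, WeaklySaturated F G H ∧ G.edgeSet.ncard = n}

def Saturated {α β : Type*} (F G : SimpleGraph β) (H : SimpleGraph α) : Prop :=
  G ≤ F ∧ ¬ ContainsCopy H G ∧ ∀ u v : β, F.Adj u v → ¬ G.Adj u v →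
    ContainsCopy H (G ⊔ SimpleGraph.fromEdgeSet {s(u, v)})

noncomputable def satNum {α β : Type*} (F : SimpleGraph β) (H : SimpleGraph α) : ℕ :=
  sInf {n | ∃ G, Saturated F G H ∧ G.edgeSet.ncard = n}

namespace Aux12

lemma z2_ne {a b : ZMod 2} (h : a ≠ b) : b = a + 1 := by revert h; revert a b; decide
lemma z2_add_one_ne (a : ZMod 2) : a + 1 ≠ a := by revert a; decide
lemma z2_cases (a : ZMod 2) : a = 0 ∨ a = 1 := by revert a; decide
lemma z2_ne_zero {a : ZMod 2} (h : a ≠ 0) : a = 1 := by revert h; revert a; decide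

variable {d : ℕ}

def flp (i : Fin d) (u : Fin d → ZMod 2) : Fin d → ZMod 2 := Function.update u i (u i + 1)

lemma flp_self (i : Fin d) (u : Fin d → ZMod 2) : flp i u i = u i + 1 :=
  Function.update_self ..

lemma flp_ne_apply {i j : Fin d} (h : j ≠ i) (u : Fin d → ZMod 2) : flp i u j = u j :=
  Function.update_of_ne h _ _

lemma flp_ne (i : Fin d) (u : Fin d → ZMod 2) : flp i u ≠ u := by
  intro h
  exact z2_add_one_ne (u i) (by rw [← flp_self i u, h])

lemma flp_flp (i : Fin d) (u : Fin d → ZMod 2) : flp i (flp i u) = u := by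
  funext j
  by_cases h : j = i
  · subst h
    rw [flp_self, flp_self]
    revert u; intro u; generalize u j = a; revert a; decide
  · rw [flp_ne_apply h, flp_ne_apply h]

lemma flp_dir_unique {i i' : Fin d} {u : Fin d → ZMod 2} (h : flp i u = flp i' u) : i = i' := by
  by_contra hne
  have := congrFun h i
  rw [flp_self, flp_ne_apply hne] at this
  exact z2_add_one_ne (u i) this

lemma cube_adj {u v : Fin d → ZMod 2} : (cube d).Adj u v ↔ ∃ i, v = flp i u := by
  constructor
  · rintro ⟨hne, h | h⟩
    · obtain ⟨i, hi, hj⟩ := h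
      refine ⟨i, funext fun j => ?_⟩
      by_cases hji : j = i
      · subst hji; rw [flp_self]; exact z2_ne hi
      · rw [flp_ne_apply hji]; exact (hj j hji).symm
    · obtain ⟨i, hi, hj⟩ := h
      refine ⟨i, funext fun j => ?_⟩
      by_cases hji : j = i
      · subst hji; rw [flp_self]
        have h2 : u j = v j + 1 := z2_ne hi
        rw [h2]
        have : ∀ a : ZMod 2, a = a + 1 + 1 := by decide
        exact this (v j)
      · rw [flp_ne_apply hji]; exact (hj j hji)
  · rintro ⟨i, rfl⟩
    refine ⟨Ne.symm (flp_ne i u), Or.inl ⟨i, ?_, fun j hj => (flp_ne_apply hj u).symm⟩⟩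
    rw [flp_self]; exact (z2_add_one_ne (u i)).symm

end Aux12

namespace Aux12

variable {d m : ℕ}

def supp (y : Fin d → ZMod 2) : Finset (Fin d) := Finset.univ.filter (fun i => y i = 1)

lemma mem_supp {y : Fin d → ZMod 2} {i : Fin d} : i ∈ supp y ↔ y i = 1 := by
  simp [supp]

lemma supp_flp {i : Fin d} {y : Fin d → ZMod 2} (h : y i = 1) :
    supp (flp i y) = (supp y).erase i := by
  ext j
  rcases eq_or_ne j i with rfl | hj
  · simp [mem_supp, flp_self, h]
  · simp [mem_supp, Finset.mem_erase, hj, flp_ne_apply hj]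

lemma supp_eq_empty {y : Fin d → ZMod 2} (h : supp y = ∅) : y = 0 := by
  funext i
  have : i ∉ supp y := by rw [h]; exact Finset.notMem_empty i
  rw [mem_supp] at this
  rcases z2_cases (y i) with h0 | h1
  · exact h0
  · exact absurd h1 this

lemma flp_comm (a b : Fin d) (u : Fin d → ZMod 2) : flp a (flp b u) = flp b (flp a u) := by
  rcases eq_or_ne a b with rfl | hab
  · rfl
  funext l
  rcases eq_or_ne l a with rfl | ha
  · rw [flp_self, flp_ne_apply hab, flp_ne_apply hab, flp_self]
  · rcases eq_or_ne l b with rfl | hb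
    · rw [flp_ne_apply (Ne.symm hab), flp_self, flp_self, flp_ne_apply (Ne.symm hab)]
    · rw [flp_ne_apply ha, flp_ne_apply hb, flp_ne_apply hb, flp_ne_apply ha]



lemma vandermonde_zero {M : ℕ} {s : Fin M → ℝ} (hs : Function.Injective s)
    {c : Fin M → ℝ} (h : ∀ k : Fin M, ∑ r, c r * s r ^ (k : ℕ) = 0) : c = 0 := by
  set A := Matrix.vandermonde s with hA
  have hdet : A.det ≠ 0 := by
    rw [Matrix.det_vandermonde]
    refine Finset.prod_ne_zero_iff.2 fun i _ => Finset.prod_ne_zero_iff.2 fun j hj => ?_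
    have : i ≠ j := ne_of_lt (Finset.mem_Ioi.1 hj)
    exact sub_ne_zero.2 fun hsj => this (hs hsj.symm)
  have hmul : Matrix.vecMul c A = 0 := by
    funext k
    simpa [Matrix.vecMul, dotProduct, hA, Matrix.vandermonde] using h k
  have h1 : A * A⁻¹ = 1 := Matrix.mul_nonsing_inv A (isUnit_iff_ne_zero.2 hdet)
  calc c = Matrix.vecMul c 1 := by rw [Matrix.vecMul_one]
    _ = Matrix.vecMul (Matrix.vecMul c A) A⁻¹ := by rw [Matrix.vecMul_vecMul, h1]
    _ = 0 := by rw [hmul, Matrix.zero_vecMul]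

lemma exists_dep {M : ℕ} {s : Fin (M + 1) → ℝ} (hs : Function.Injective s) (j0 : Fin (M + 1)) :
    ∃ α : Fin (M + 1) → ℝ, α j0 ≠ 0 ∧ ∀ k : Fin M, ∑ j, α j * s j ^ (k : ℕ) = 0 := by
  set u : Fin (M + 1) → (Fin M → ℝ) := fun j k => s j ^ (k : ℕ) with hu
  have hnli : ¬ LinearIndependent ℝ u := by
    intro hli
    have := hli.fintype_card_le_finrank
    rw [Module.finrank_fintype_fun_eq_card] at this
    simp at this
  obtain ⟨g, hg0, j1, hj1⟩ := Fintype.not_linearIndependent_iff.1 hnli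
  have hsum : ∀ k : Fin M, ∑ j, g j * s j ^ (k : ℕ) = 0 := by
    intro k
    have := congrFun hg0 k
    simpa [hu] using this
  by_cases hgj0 : g j0 = 0
  · exfalso
    have hinj : Function.Injective (s ∘ j0.succAbove) :=
      hs.comp Fin.succAbove_right_injective
    have hc : (g ∘ j0.succAbove) = 0 := by
      apply vandermonde_zero hinj
      intro k
      have := hsum k
      rw [Fin.sum_univ_succAbove _ j0, hgj0, zero_mul, zero_add] at this
      simpa using this
    rcases eq_or_ne j1 j0 with rfl | hne
    · exact hj1 hgj0
    · obtain ⟨z, hz⟩ := Fin.exists_succAbove_eq hne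
      exact hj1 (by rw [← hz]; exact congrFun hc z)
  · exact ⟨g, hgj0, hsum⟩


lemma hom_subcube {f : (Fin m → ZMod 2) → (Fin d → ZMod 2)}
    (inj : Function.Injective f)
    (hom : ∀ ⦃a b⦄, (cube m).Adj a b → (cube d).Adj (f a) (f b)) :
    ∃ σ : Fin m → Fin d, Function.Injective σ ∧ ∀ x j, f (flp j x) = flp (σ j) (f x) := by
  have adjm : ∀ (x : Fin m → ZMod 2) (j : Fin m), (cube m).Adj x (flp j x) :=
    fun x j => cube_adj.2 ⟨j, rfl⟩
  have hex : ∀ (x : Fin m → ZMod 2) (j : Fin m), ∃ i, f (flp j x) = flp i (f x) :=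
    fun x j => cube_adj.1 (hom (adjm x j))
  choose g hg using hex
  have claim1 : ∀ x j, g (flp j x) j = g x j := by
    intro x j
    have h1 : f x = flp (g (flp j x) j) (flp (g x j) (f x)) := by
      have h0 := hg (flp j x) j
      rw [flp_flp, hg x j] at h0
      exact h0
    by_contra hne
    have h2 := congrFun h1 (g (flp j x) j)
    rw [flp_self, flp_ne_apply hne] at h2
    exact z2_add_one_ne _ h2.symm
  have claim2 : ∀ x j k, g (flp k x) j = g x j := by
    intro x j k
    rcases eq_or_ne j k with rfl | hjk
    · exact claim1 x j
    have e1 : f (flp j (flp k x)) = flp (g (flp k x) j) (flp (g x k) (f x)) := by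
      rw [hg (flp k x) j, hg x k]
    have e2 : f (flp k (flp j x)) = flp (g (flp j x) k) (flp (g x j) (f x)) := by
      rw [hg (flp j x) k, hg x j]
    have hE : flp (g (flp k x) j) (flp (g x k) (f x)) = flp (g (flp j x) k) (flp (g x j) (f x)) := by
      rw [← e1, flp_comm, e2]
    have hi12 : g x j ≠ g x k := by
      intro h12
      have h5 : f (flp j x) = f (flp k x) := by rw [hg x j, hg x k, h12]
      exact hjk (flp_dir_unique (inj h5))
    have hqi1 : g (flp j x) k ≠ g x j := by
      intro hq1
      have h5 : f (flp k (flp j x)) = f x := by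
        rw [e2, hq1, flp_flp]
      have h6 := congrFun (inj h5) k
      rw [flp_self, flp_ne_apply (Ne.symm hjk)] at h6
      exact z2_add_one_ne _ h6
    by_contra hne
    have h3 := congrFun hE (g x j)
    rw [flp_ne_apply (fun h => hne h.symm), flp_ne_apply hi12,
        flp_ne_apply (Ne.symm hqi1), flp_self] at h3
    exact z2_add_one_ne _ h3.symm
  have claim3 : ∀ x j, g x j = g 0 j := by
    have key : ∀ n (x : Fin m → ZMod 2), (supp x).card ≤ n → ∀ j, g x j = g 0 j := by
      intro n
      induction n with
      | zero =>
        intro x hx j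
        rw [supp_eq_empty (Finset.card_eq_zero.1 (Nat.le_zero.1 hx))]
      | succ n ih =>
        intro x hx j
        rcases Finset.eq_empty_or_nonempty (supp x) with he | ⟨k, hk⟩
        · rw [supp_eq_empty he]
        · have hxk : x k = 1 := mem_supp.1 hk
          have h1 : g x j = g (flp k x) j := by
            conv_lhs => rw [← flp_flp k x]
            exact claim2 (flp k x) j k
          rw [h1]
          apply ih
          rw [supp_flp hxk]
          have h3 := Finset.card_erase_of_mem hk
          omega
    exact fun x j => key (supp x).card x le_rfl j
  refine ⟨g 0, ?_, fun x j => by rw [hg x j, claim3 x j]⟩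
  intro j j' hjj
  have h7 : f (flp j 0) = f (flp j' 0) := by rw [hg 0 j, hg 0 j', hjj]
  exact flp_dir_unique (inj h7)


noncomputable def tt {d : ℕ} (i : Fin d) : ℝ := (i : ℕ) + 1

lemma tt_inj {d : ℕ} : Function.Injective (tt (d := d)) := by
  intro i j h
  have : ((i : ℕ) : ℝ) = ((j : ℕ) : ℝ) := by
    simpa [tt] using h
  exact Fin.val_injective (Nat.cast_injective this)

open Classical in
noncomputable def w (d M : ℕ) (u v : Fin d → ZMod 2) : (Fin d → ZMod 2) × Fin M → ℝ :=
  fun p => (if p.1 = u ∨ p.1 = v then (1:ℝ) else 0) *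
    ∑ i, (if u i ≠ v i then tt i ^ (p.2 : ℕ) else 0)

lemma w_symm (d M : ℕ) (u v : Fin d → ZMod 2) : w d M u v = w d M v u := by
  funext p
  simp only [w]
  congr 1
  · exact if_congr or_comm rfl rfl
  · exact Finset.sum_congr rfl fun i _ => if_congr ne_comm rfl rfl

lemma w_flp (d M : ℕ) (i : Fin d) (u : Fin d → ZMod 2) (p : (Fin d → ZMod 2) × Fin M) :
    w d M u (flp i u) p = (if p.1 = u ∨ p.1 = flp i u then (1:ℝ) else 0) * tt i ^ (p.2 : ℕ) := by
  simp only [w]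
  congr 1
  rw [Finset.sum_eq_single i]
  · rw [if_pos]
    rw [flp_self]
    exact fun h => z2_add_one_ne (u i) h.symm
  · intro j _ hj
    rw [if_neg]
    rw [flp_ne_apply hj]
    simp
  · intro h; exact absurd (Finset.mem_univ i) h

lemma copy_span {d M : ℕ} {f : (Fin (M + 1) → ZMod 2) → (Fin d → ZMod 2)}
    (inj : Function.Injective f)
    (hom : ∀ ⦃x y⦄, (cube (M + 1)).Adj x y → (cube d).Adj (f x) (f y))
    {a b : Fin (M + 1) → ZMod 2} (hab : (cube (M + 1)).Adj a b)
    {T : Set ((Fin d → ZMod 2) × Fin M → ℝ)}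
    (hT : ∀ x y, (cube (M + 1)).Adj x y → s(f x, f y) ≠ s(f a, f b) → w d M (f x) (f y) ∈ T) :
    w d M (f a) (f b) ∈ Submodule.span ℝ T := by
  classical
  obtain ⟨σ, hσinj, hσ⟩ := hom_subcube inj hom
  obtain ⟨j0, rfl⟩ := cube_adj.1 hab
  obtain ⟨α, hα0, hdep⟩ := exists_dep (s := fun j => tt (σ j)) (tt_inj.comp hσinj) j0
  set W0 := w d M (f a) (f (flp j0 a)) with hW0def
  set F : ((Fin (M + 1) → ZMod 2) × Fin (M + 1)) → ((Fin d → ZMod 2) × Fin M → ℝ) :=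
    fun q => α q.2 • w d M (f q.1) (f (flp q.2 q.1)) with hF
  have hweval : ∀ (x : Fin (M + 1) → ZMod 2) (j : Fin (M + 1)) (p : (Fin d → ZMod 2) × Fin M),
      w d M (f x) (f (flp j x)) p
        = ((if p.1 = f x then (1:ℝ) else 0) + (if p.1 = flp (σ j) (f x) then (1:ℝ) else 0))
          * tt (σ j) ^ (p.2 : ℕ) := by
    intro x j p
    rw [hσ x j, w_flp]
    congr 1
    by_cases h1 : p.1 = f x <;> by_cases h2 : p.1 = flp (σ j) (f x)
    · exact absurd (h2.symm.trans h1) (flp_ne (σ j) (f x))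
    · simp [h1, h2, Ne.symm (flp_ne (σ j) (f x)), flp_ne (σ j) (f x)]
    · simp [h1, h2, Ne.symm (flp_ne (σ j) (f x)), flp_ne (σ j) (f x)]
    · simp [h1, h2, Ne.symm (flp_ne (σ j) (f x)), flp_ne (σ j) (f x)]
  have hS : ∑ x : Fin (M + 1) → ZMod 2, ∑ j : Fin (M + 1),
      α j • w d M (f x) (f (flp j x)) = 0 := by
    funext p
    simp only [Finset.sum_apply, Pi.smul_apply, smul_eq_mul, Pi.zero_apply]
    have hterm : ∀ (x : Fin (M + 1) → ZMod 2) (j : Fin (M + 1)),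
        α j * w d M (f x) (f (flp j x)) p
          = α j * tt (σ j) ^ (p.2 : ℕ) * (if p.1 = f x then (1:ℝ) else 0)
            + α j * tt (σ j) ^ (p.2 : ℕ) * (if p.1 = flp (σ j) (f x) then (1:ℝ) else 0) := by
      intro x j
      rw [hweval x j p]
      ring
    rw [Finset.sum_congr rfl fun x _ => Finset.sum_congr rfl fun j _ => hterm x j]
    simp only [Finset.sum_add_distrib]
    have key0 : ∑ j : Fin (M + 1), α j * tt (σ j) ^ ((p.2 : Fin M) : ℕ) = 0 := hdep p.2
    have e1 : ∑ x : Fin (M + 1) → ZMod 2, ∑ j : Fin (M + 1),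
        α j * tt (σ j) ^ (p.2 : ℕ) * (if p.1 = f x then (1:ℝ) else 0) = 0 := by
      refine Finset.sum_eq_zero fun x _ => ?_
      rw [← Finset.sum_mul, key0, zero_mul]
    have e2 : ∑ x : Fin (M + 1) → ZMod 2, ∑ j : Fin (M + 1),
        α j * tt (σ j) ^ (p.2 : ℕ) * (if p.1 = flp (σ j) (f x) then (1:ℝ) else 0) = 0 := by
      rw [Finset.sum_comm]
      have hre : ∀ j : Fin (M + 1),
          ∑ x : Fin (M + 1) → ZMod 2, (if p.1 = flp (σ j) (f x) then (1:ℝ) else 0)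
            = ∑ x : Fin (M + 1) → ZMod 2, (if p.1 = f x then (1:ℝ) else 0) := by
        intro j
        refine Fintype.sum_bijective (flp j) (Function.Involutive.bijective (flp_flp j)) _ _ ?_
        intro x
        have h9 : f (flp j x) = flp (σ j) (f x) := hσ x j
        rw [h9]
      have hj1 : ∀ j : Fin (M + 1),
          ∑ x : Fin (M + 1) → ZMod 2,
            α j * tt (σ j) ^ (p.2 : ℕ) * (if p.1 = flp (σ j) (f x) then (1:ℝ) else 0)
          = α j * tt (σ j) ^ (p.2 : ℕ)
            * ∑ x : Fin (M + 1) → ZMod 2, (if p.1 = f x then (1:ℝ) else 0) := by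
        intro j
        rw [← Finset.mul_sum, hre j]
      rw [Finset.sum_congr rfl fun j _ => hj1 j, ← Finset.sum_mul, key0, zero_mul]
    rw [e1, e2, add_zero]
  have hSprod : ∑ q : (Fin (M + 1) → ZMod 2) × Fin (M + 1), F q = 0 := by
    rw [Fintype.sum_prod_type]
    exact hS
  have hsplit := Finset.sum_filter_add_sum_filter_not Finset.univ
    (fun q => q = (a, j0) ∨ q = (flp j0 a, j0)) F
  rw [hSprod] at hsplit
  have hpair : Finset.univ.filter
      (fun q : (Fin (M + 1) → ZMod 2) × Fin (M + 1) => q = (a, j0) ∨ q = (flp j0 a, j0))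
      = {(a, j0), (flp j0 a, j0)} := by
    ext q
    simp
  have hne2 : ((a, j0) : (Fin (M + 1) → ZMod 2) × Fin (M + 1)) ≠ (flp j0 a, j0) := by
    intro h
    exact flp_ne j0 a (congrArg Prod.fst h).symm
  rw [hpair, Finset.sum_pair hne2] at hsplit
  have hF2 : F (flp j0 a, j0) = α j0 • W0 := by
    show α j0 • w d M (f (flp j0 a)) (f (flp j0 (flp j0 a))) = α j0 • W0
    rw [flp_flp, hW0def, w_symm]
  have hF1 : F (a, j0) = α j0 • W0 := rfl
  rw [hF1, hF2] at hsplit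
  have hmem : ∑ q ∈ Finset.univ.filter
      (fun q : (Fin (M + 1) → ZMod 2) × Fin (M + 1) =>
        ¬ (q = (a, j0) ∨ q = (flp j0 a, j0))), F q ∈ Submodule.span ℝ T := by
    refine Submodule.sum_mem _ fun q hq => ?_
    rw [Finset.mem_filter] at hq
    refine Submodule.smul_mem _ _ (Submodule.subset_span ?_)
    refine hT q.1 (flp q.2 q.1) (cube_adj.2 ⟨q.2, rfl⟩) ?_
    intro hsym
    apply hq.2
    rw [Sym2.eq_iff] at hsym
    rcases hsym with ⟨h1, h2⟩ | ⟨h1, h2⟩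
    · have hx : q.1 = a := inj h1
      have hj : flp q.2 q.1 = flp j0 a := inj h2
      rw [hx] at hj
      exact Or.inl (Prod.ext_iff.2 ⟨hx, flp_dir_unique hj⟩)
    · have hx : q.1 = flp j0 a := inj h1
      have hj : flp q.2 q.1 = a := inj h2
      rw [hx] at hj
      refine Or.inr (Prod.ext_iff.2 ⟨hx, ?_⟩)
      have h8 : flp q.2 (flp j0 a) = flp j0 (flp j0 a) := by rw [hj, flp_flp]
      exact flp_dir_unique h8
  have h2αne : (2 * α j0) ≠ 0 := mul_ne_zero two_ne_zero hα0
  have hc : (2 * α j0) • W0 = -(∑ q ∈ Finset.univ.filter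
      (fun q : (Fin (M + 1) → ZMod 2) × Fin (M + 1) =>
        ¬ (q = (a, j0) ∨ q = (flp j0 a, j0))), F q) := by
    rw [two_mul, add_smul]
    exact eq_neg_of_add_eq_zero_left hsplit
  have hW0eq : W0 = (2 * α j0)⁻¹ • ((2 * α j0) • W0) := (inv_smul_smul₀ h2αne W0).symm
  rw [hW0eq, hc]
  exact Submodule.smul_mem _ _ (Submodule.neg_mem _ hmem)


def cowt {d : ℕ} (y : Fin d → ZMod 2) : ℕ := (Finset.univ.filter (fun i => y i = 0)).card

lemma cowt_flp {d : ℕ} {i : Fin d} {y : Fin d → ZMod 2} (h : y i = 1) :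
    cowt (flp i y) = cowt y + 1 := by
  have hset : Finset.univ.filter (fun j => flp i y j = 0)
      = insert i (Finset.univ.filter (fun j => y j = 0)) := by
    ext j
    rcases eq_or_ne j i with rfl | hj
    · simp [flp_self, h]
      decide
    · simp [flp_ne_apply hj, hj]
  have hnot : i ∉ Finset.univ.filter (fun j => y j = 0) := by
    simp [h]
  rw [cowt, hset, Finset.card_insert_of_notMem hnot, cowt]

def sel {d : ℕ} (M : ℕ) (yh : {y : Fin d → ZMod 2 // M ≤ (supp y).card}) : Fin M → Fin d :=
  fun r => (Finset.orderEmbOfCardLe (supp yh.1) yh.2) r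

lemma sel_mem {d M : ℕ} (yh : {y : Fin d → ZMod 2 // M ≤ (supp y).card}) (r : Fin M) :
    yh.1 (sel M yh r) = 1 :=
  mem_supp.1 (Finset.orderEmbOfCardLe_mem (supp yh.1) yh.2 r)

lemma sel_inj {d M : ℕ} (yh : {y : Fin d → ZMod 2 // M ≤ (supp y).card}) :
    Function.Injective (sel M yh) :=
  (Finset.orderEmbOfCardLe (supp yh.1) yh.2).injective

noncomputable def fam (d M : ℕ) :
    ({y : Fin d → ZMod 2 // M ≤ (supp y).card} × Fin M) → ((Fin d → ZMod 2) × Fin M → ℝ) :=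
  fun q => w d M (flp (sel M q.1 q.2) q.1.1) q.1.1

lemma fam_eval {d M : ℕ} (q : {y : Fin d → ZMod 2 // M ≤ (supp y).card} × Fin M)
    (p : (Fin d → ZMod 2) × Fin M) :
    fam d M q p = (if p.1 = q.1.1 ∨ p.1 = flp (sel M q.1 q.2) q.1.1 then (1:ℝ) else 0)
      * tt (sel M q.1 q.2) ^ (p.2 : ℕ) := by
  rw [fam, w_symm, w_flp]

lemma fam_li (d M : ℕ) : LinearIndependent ℝ (fam d M) := by
  classical
  rw [Fintype.linearIndependent_iff]
  intro g hsum
  suffices key : ∀ N : ℕ, ∀ q : {y : Fin d → ZMod 2 // M ≤ (supp y).card} × Fin M,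
      cowt q.1.1 = N → g q = 0 by
    intro q
    exact key (cowt q.1.1) q rfl
  intro N
  induction N using Nat.strong_induction_on with
  | _ N IH =>
    rintro ⟨⟨y, hy⟩, r⟩ hN
    have hsys : ∀ k : Fin M,
        ∑ r' : Fin M, g (⟨y, hy⟩, r') * tt (sel M ⟨y, hy⟩ r') ^ (k : ℕ) = 0 := by
      intro k
      have h0 := congrFun hsum (y, k)
      rw [Finset.sum_apply] at h0
      simp only [Pi.smul_apply, smul_eq_mul, Pi.zero_apply] at h0
      rw [Fintype.sum_prod_type] at h0
      have hother : ∀ yh' : {y : Fin d → ZMod 2 // M ≤ (supp y).card},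
          yh' ∈ Finset.univ → yh' ≠ ⟨y, hy⟩ →
          ∑ r' : Fin M, g (yh', r') * fam d M (yh', r') (y, k) = 0 := by
        intro yh' _ hne
        refine Finset.sum_eq_zero fun r' _ => ?_
        rw [fam_eval]
        by_cases hcase : ((y, k).1 = (yh', r').1.1 ∨
            (y, k).1 = flp (sel M (yh', r').1 (yh', r').2) (yh', r').1.1)
        · rcases hcase with hc1 | hc2
          · exact absurd (Subtype.ext hc1.symm) hne
          · have h1 : yh'.1 (sel M yh' r') = 1 := sel_mem yh' r'
            have hc2' : y = flp (sel M yh' r') yh'.1 := hc2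
            have h2 : cowt y = cowt yh'.1 + 1 := by
              rw [hc2']
              exact cowt_flp h1
            have h3 : cowt yh'.1 < N := by
              have hN' : cowt y = N := hN
              omega
            rw [IH _ h3 (yh', r') rfl, zero_mul]
        · rw [if_neg hcase, zero_mul, mul_zero]
      rw [Finset.sum_eq_single_of_mem ⟨y, hy⟩ (Finset.mem_univ _) hother] at h0
      rw [← h0]
      refine Finset.sum_congr rfl fun r' _ => ?_
      rw [fam_eval]
      simp
    have hc := vandermonde_zero (s := fun r' => tt (sel M ⟨y, hy⟩ r'))
      (tt_inj.comp (sel_inj _)) hsys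
    exact congrFun hc r

lemma card_bad (d M : ℕ) :
    (Finset.univ.filter (fun y : Fin d → ZMod 2 => ¬ (M ≤ (supp y).card))).card
      ≤ M * (d + 1) ^ M := by
  classical
  have hsuppinj : Function.Injective (supp (d := d)) := by
    intro y y' h
    funext i
    have h1 : (y i = 1) ↔ (y' i = 1) := by rw [← mem_supp, ← mem_supp, h]
    rcases z2_cases (y i) with h0 | h0 <;> rcases z2_cases (y' i) with h0' | h0' <;>
      simp [h0, h0'] at h1 ⊢
  set B := Finset.univ.filter (fun y : Fin d → ZMod 2 => ¬ (M ≤ (supp y).card)) with hB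
  have h1 : B.card = (B.image supp).card := (Finset.card_image_of_injective B hsuppinj).symm
  have h2 : B.image supp ⊆ (Finset.range M).biUnion
      (fun j => Finset.powersetCard j (Finset.univ : Finset (Fin d))) := by
    intro s hs
    rw [Finset.mem_image] at hs
    obtain ⟨y, hy, rfl⟩ := hs
    rw [hB, Finset.mem_filter] at hy
    rw [Finset.mem_biUnion]
    exact ⟨(supp y).card, Finset.mem_range.2 (by omega),
      Finset.mem_powersetCard.2 ⟨Finset.subset_univ _, rfl⟩⟩
  have h3 : ((Finset.range M).biUnion
      (fun j => Finset.powersetCard j (Finset.univ : Finset (Fin d)))).card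
        ≤ ∑ j ∈ Finset.range M, (d + 1) ^ M := by
    refine le_trans (Finset.card_biUnion_le) (Finset.sum_le_sum fun j hj => ?_)
    rw [Finset.card_powersetCard, Finset.card_univ, Fintype.card_fin]
    calc d.choose j ≤ d ^ j := Nat.choose_le_pow d j
      _ ≤ (d + 1) ^ j := Nat.pow_le_pow_left (by omega) j
      _ ≤ (d + 1) ^ M := Nat.pow_le_pow_right (by omega) (le_of_lt (Finset.mem_range.1 hj))
  rw [h1]
  calc (B.image supp).card ≤ _ := Finset.card_le_card h2
    _ ≤ ∑ j ∈ Finset.range M, (d + 1) ^ M := h3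
    _ = M * (d + 1) ^ M := by rw [Finset.sum_const, Finset.card_range, smul_eq_mul]

lemma card_good (d M : ℕ) :
    2 ^ d - M * (d + 1) ^ M ≤ Fintype.card {y : Fin d → ZMod 2 // M ≤ (supp y).card} := by
  classical
  have hpart := Finset.card_filter_add_card_filter_not
    (s := (Finset.univ : Finset (Fin d → ZMod 2))) (p := fun y => M ≤ (supp y).card)
  rw [Finset.card_univ] at hpart
  have hcard : Fintype.card (Fin d → ZMod 2) = 2 ^ d := by
    rw [Fintype.card_fun, ZMod.card, Fintype.card_fin]
  rw [Fintype.card_subtype]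
  have := card_bad d M
  omega


lemma sat_bound (d M : ℕ) {G : SimpleGraph (Fin d → ZMod 2)}
    (hsat : Saturated (cube d) G (cube (M + 1))) :
    M * (2 ^ d - M * (d + 1) ^ M) ≤ G.edgeSet.ncard := by
  classical
  obtain ⟨hle, hfree, hadd⟩ := hsat
  set wE : Sym2 (Fin d → ZMod 2) → ((Fin d → ZMod 2) × Fin M → ℝ) :=
    Sym2.lift ⟨w d M, w_symm d M⟩ with hwE
  set T : Set ((Fin d → ZMod 2) × Fin M → ℝ) := wE '' G.edgeSet with hT
  have stepA : ∀ u v : Fin d → ZMod 2, (cube d).Adj u v →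
      w d M u v ∈ Submodule.span ℝ T := by
    intro u v hadj
    by_cases hG : G.Adj u v
    · exact Submodule.subset_span ⟨s(u, v), hG, Sym2.lift_mk _ _ _⟩
    · have hcopy := hadd u v hadj hG
      obtain ⟨f, finj, fhom⟩ := hcopy
      have hle2 : G ⊔ SimpleGraph.fromEdgeSet {s(u, v)} ≤ cube d := by
        refine sup_le hle ?_
        intro x y hxy
        rw [SimpleGraph.fromEdgeSet_adj] at hxy
        obtain ⟨h1, h2⟩ := hxy
        rw [Set.mem_singleton_iff, Sym2.eq_iff] at h1
        rcases h1 with ⟨rfl, rfl⟩ | ⟨rfl, rfl⟩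
        · exact hadj
        · exact hadj.symm
      have hedge : ∃ a b, (cube (M + 1)).Adj a b ∧ s(f a, f b) = s(u, v) := by
        by_contra hno
        push_neg at hno
        apply hfree
        refine ⟨f, finj, fun a b hab => ?_⟩
        have h2 := fhom hab
        rw [SimpleGraph.sup_adj] at h2
        rcases h2 with h2 | h2
        · exact h2
        · rw [SimpleGraph.fromEdgeSet_adj] at h2
          exact absurd (Set.mem_singleton_iff.1 h2.1) (hno a b hab)
      obtain ⟨a, b, hab, hs⟩ := hedge
      have hw : w d M (f a) (f b) ∈ Submodule.span ℝ T := by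
        refine copy_span finj (fun x y hxy => hle2 (fhom hxy)) hab ?_
        intro x y hxy hne
        have h2 := fhom hxy
        rw [SimpleGraph.sup_adj] at h2
        rcases h2 with h2 | h2
        · exact ⟨s(f x, f y), h2, Sym2.lift_mk _ _ _⟩
        · rw [SimpleGraph.fromEdgeSet_adj] at h2
          exact absurd (hs ▸ Set.mem_singleton_iff.1 h2.1) hne
      rw [Sym2.eq_iff] at hs
      rcases hs with ⟨h1, h2⟩ | ⟨h1, h2⟩
      · rwa [h1, h2] at hw
      · rw [h1, h2] at hw
        rwa [w_symm] at hw
  have stepB : Set.range (fam d M) ⊆ ↑(Submodule.span ℝ T) := by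
    rintro _ ⟨q, rfl⟩
    have hadj : (cube d).Adj (flp (sel M q.1 q.2) q.1.1) q.1.1 :=
      cube_adj.2 ⟨sel M q.1 q.2, (flp_flp _ _).symm⟩
    exact stepA _ _ hadj
  have hli := fam_li d M
  have h1 : Fintype.card ({y : Fin d → ZMod 2 // M ≤ (supp y).card} × Fin M)
      = Module.finrank ℝ (Submodule.span ℝ (Set.range (fam d M))) :=
    (finrank_span_eq_card hli).symm
  have h2 : Submodule.span ℝ (Set.range (fam d M)) ≤ Submodule.span ℝ T :=
    Submodule.span_le.2 stepB
  have h3 := Submodule.finrank_mono h2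
  have hEfin : G.edgeSet.Finite := Set.toFinite _
  have hTeq : T = ↑(hEfin.toFinset.image wE) := by
    rw [Finset.coe_image, Set.Finite.coe_toFinset]
  have h4 : Module.finrank ℝ (Submodule.span ℝ T) ≤ G.edgeSet.ncard := by
    rw [hTeq]
    refine le_trans (finrank_span_finset_le_card _) ?_
    refine le_trans (Finset.card_image_le) ?_
    rw [Set.ncard_eq_toFinset_card _ hEfin]
  have h5 : Fintype.card ({y : Fin d → ZMod 2 // M ≤ (supp y).card} × Fin M)
      ≤ G.edgeSet.ncard := by
    rw [h1]
    exact le_trans h3 h4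
  rw [Fintype.card_prod, Fintype.card_fin] at h5
  have h6 := card_good d M
  calc M * (2 ^ d - M * (d + 1) ^ M)
      ≤ M * Fintype.card {y : Fin d → ZMod 2 // M ≤ (supp y).card} :=
        Nat.mul_le_mul_left M h6
    _ = Fintype.card {y : Fin d → ZMod 2 // M ≤ (supp y).card} * M := Nat.mul_comm _ _
    _ ≤ G.edgeSet.ncard := h5

lemma exists_sat (d m : ℕ) (hm : 0 < m) :
    ∃ G, Saturated (cube d) G (cube m) := by
  classical
  have hbot : ¬ ContainsCopy (cube m) (⊥ : SimpleGraph (Fin d → ZMod 2)) := by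
    rintro ⟨f, finj, fhom⟩
    exact fhom (a := 0) (b := flp (⟨0, hm⟩ : Fin m) 0) (cube_adj.2 ⟨(⟨0, hm⟩ : Fin m), rfl⟩)
  obtain ⟨G, hGs, hGmax⟩ := Set.Finite.exists_maximalFor id
    {G : SimpleGraph (Fin d → ZMod 2) | G ≤ cube d ∧ ¬ ContainsCopy (cube m) G}
    (Set.toFinite _) ⟨⊥, bot_le, hbot⟩
  refine ⟨G, hGs.1, hGs.2, fun u v hF hnG => ?_⟩
  by_contra hn
  have hle2 : G ⊔ SimpleGraph.fromEdgeSet {s(u, v)} ≤ cube d := by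
    refine sup_le hGs.1 ?_
    intro x y hxy
    rw [SimpleGraph.fromEdgeSet_adj] at hxy
    obtain ⟨h1, h2⟩ := hxy
    rw [Set.mem_singleton_iff, Sym2.eq_iff] at h1
    rcases h1 with ⟨rfl, rfl⟩ | ⟨rfl, rfl⟩
    · exact hF
    · exact hF.symm
  have hmem : G ⊔ SimpleGraph.fromEdgeSet {s(u, v)} ∈
      {G : SimpleGraph (Fin d → ZMod 2) | G ≤ cube d ∧ ¬ ContainsCopy (cube m) G} :=
    ⟨hle2, hn⟩
  have heq := (le_antisymm (hGmax hmem le_sup_left) le_sup_left).symm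
  simp only [id_eq] at heq
  have hadj2 : (G ⊔ SimpleGraph.fromEdgeSet {s(u, v)}).Adj u v := by
    rw [SimpleGraph.sup_adj]
    refine Or.inr ?_
    rw [SimpleGraph.fromEdgeSet_adj]
    exact ⟨Set.mem_singleton _, hF.ne⟩
  rw [← heq] at hadj2
  exact hnG hadj2

end Aux12

open Aux12 Filter in
theorem stmt_12 (m : ℕ) (hm : 2 ≤ m) :
    ∀ ε : ℝ, 0 < ε → ∃ D : ℕ, ∀ d ≥ D,
      ((m : ℝ) - 1 - ε) * 2 ^ d ≤ (satNum (cube d) (cube m) : ℝ) := by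
  obtain ⟨M, rfl⟩ : ∃ M, m = M + 1 := ⟨m - 1, by omega⟩
  have hM1 : 1 ≤ M := by omega
  intro ε hε
  set ε' : ℝ := min ε 1 with hε'def
  have hε' : 0 < ε' := lt_min hε one_pos
  have hMpos : (0:ℝ) < (M:ℝ) ^ 2 := by positivity
  have hten : Tendsto (fun n : ℕ => (n : ℝ) ^ M / 2 ^ n) atTop (nhds 0) :=
    tendsto_pow_const_div_const_pow_of_one_lt M one_lt_two
  have hten2 : Tendsto (fun d : ℕ => ((d + 1 : ℕ) : ℝ) ^ M / 2 ^ (d + 1)) atTop (nhds 0) :=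
    hten.comp (tendsto_add_atTop_nat 1)
  have hten3 : Tendsto (fun d : ℕ => ((d + 1 : ℕ) : ℝ) ^ M / 2 ^ d) atTop (nhds 0) := by
    have heq : (fun d : ℕ => ((d + 1 : ℕ) : ℝ) ^ M / 2 ^ d)
        = (fun d : ℕ => 2 * (((d + 1 : ℕ) : ℝ) ^ M / 2 ^ (d + 1))) := by
      funext d
      rw [pow_succ]
      field_simp
    rw [heq]
    have h0 := hten2.const_mul (2:ℝ)
    simpa using h0
  have hev : ∀ᶠ d : ℕ in atTop, ((d + 1 : ℕ) : ℝ) ^ M / 2 ^ d < ε' / (M:ℝ)^2 :=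
    hten3.eventually (eventually_lt_nhds (by positivity))
  obtain ⟨D, hD⟩ := eventually_atTop.1 hev
  refine ⟨D, fun d hd => ?_⟩
  have h2dpos : (0:ℝ) < 2 ^ d := by positivity
  have hkey : (M:ℝ)^2 * ((d:ℝ) + 1) ^ M ≤ ε' * 2 ^ d := by
    have h1 := hD d hd
    rw [div_lt_div_iff₀ h2dpos hMpos] at h1
    push_cast at h1
    nlinarith [h1]
  have hnonempty : {n | ∃ G, Saturated (cube d) G (cube (M + 1)) ∧ G.edgeSet.ncard = n}.Nonempty := by
    obtain ⟨G0, hG0⟩ := exists_sat d (M + 1) (by omega)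
    exact ⟨G0.edgeSet.ncard, G0, hG0, rfl⟩
  obtain ⟨G, hGsat, hGcard⟩ := Nat.sInf_mem hnonempty
  have hsatval : satNum (cube d) (cube (M + 1)) = G.edgeSet.ncard := hGcard.symm
  have hbound := sat_bound d M hGsat
  have hpow : (0:ℝ) ≤ ((d:ℝ) + 1) ^ M := by positivity
  have hMcast : (1:ℝ) ≤ (M:ℝ) := by exact_mod_cast hM1
  have hbadle : M * (d + 1) ^ M ≤ 2 ^ d := by
    have hcast : ((M * (d + 1) ^ M : ℕ) : ℝ) ≤ ((2 ^ d : ℕ) : ℝ) := by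
      push_cast
      have hε'1 : ε' ≤ 1 := min_le_right _ _
      have hMM : (M:ℝ) ≤ (M:ℝ)^2 := by nlinarith
      have t1 : (M:ℝ) * ((d:ℝ) + 1) ^ M ≤ (M:ℝ)^2 * ((d:ℝ) + 1) ^ M :=
        mul_le_mul_of_nonneg_right hMM hpow
      have t2 : ε' * 2 ^ d ≤ 2 ^ d := by nlinarith
      linarith [hkey]
    exact_mod_cast hcast
  have hcastb : ((M * (2 ^ d - M * (d + 1) ^ M) : ℕ) : ℝ)
      = (M:ℝ) * ((2:ℝ) ^ d - (M:ℝ) * ((d:ℝ) + 1) ^ M) := by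
    rw [Nat.cast_mul, Nat.cast_sub hbadle]
    push_cast
    ring
  have hfinal : (M:ℝ) * ((2:ℝ) ^ d - (M:ℝ) * ((d:ℝ) + 1) ^ M)
      ≤ (satNum (cube d) (cube (M + 1)) : ℝ) := by
    rw [hsatval]
    calc (M:ℝ) * ((2:ℝ) ^ d - (M:ℝ) * ((d:ℝ) + 1) ^ M)
        = ((M * (2 ^ d - M * (d + 1) ^ M) : ℕ) : ℝ) := hcastb.symm
      _ ≤ (G.edgeSet.ncard : ℝ) := Nat.cast_le.2 hbound
  have hεle : ε' ≤ ε := min_le_left _ _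
  have hprod : (0:ℝ) ≤ (ε - ε') * 2 ^ d := mul_nonneg (by linarith) h2dpos.le
  calc (((M + 1 : ℕ) : ℝ) - 1 - ε) * 2 ^ d = ((M:ℝ) - ε) * 2 ^ d := by push_cast; ring
    _ ≤ (M:ℝ) * 2 ^ d - ε' * 2 ^ d := by nlinarith
    _ ≤ (M:ℝ) * 2 ^ d - (M:ℝ)^2 * ((d:ℝ) + 1) ^ M := by linarith [hkey]
    _ = (M:ℝ) * ((2:ℝ) ^ d - (M:ℝ) * ((d:ℝ) + 1) ^ M) := by ring
    _ ≤ (satNum (cube d) (cube (M + 1)) : ℝ) := hfinal
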